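/- Let β ∈ ℝ with β ≠ 0, let h₀ : ℝ → ℝ be differentiable, and let y : ℝ × ℝ → ℝ be differentiable and satisfy x = y(x,t) − ln(1 − β t h₀(y(x,t)))/β for all (x,t) in a region where 1 − β t h₀(y(x,t)) > 0. Suppose also that 1 + (∂/∂h)[−ln(1 − β t h)/β]|_{h = h₀(y(x,t))} · h₀'(y(x,t)) = 1 + (t/(1 − β t h₀(y(x,t)))) · h₀'(y(x,t)) ≠ 0 on this region. Then q(x,t) := h₀(y(x,t))/(1 − β t h₀(y(x,t))) satisfies ∂q/∂t (x,t) + q(x,t) · ∂q/∂x (x,t) = β · q(x,t)² on this region, and q(x,0) = h₀(x) for all x. -/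

import Mathlib

/-- Section 5: the Burgers equation with quadratic source term `β q²` is solved by
`q(x,t) = h₀(y)/(1 - β t h₀(y))` with `x = y - ln(1 - β t h₀(y))/β`. -/
theorem stmt_11 (β : ℝ) (hβ : β ≠ 0) (h₀ : ℝ → ℝ) (hh₀ : Differentiable ℝ h₀)
    (y : ℝ × ℝ → ℝ) (hy : Differentiable ℝ y)
    (hpos : ∀ x t : ℝ, 1 - β * t * h₀ (y (x, t)) > 0)
    (hrel : ∀ x t : ℝ, x = y (x, t) - Real.log (1 - β * t * h₀ (y (x, t))) / β)
    (hne : ∀ x t : ℝ,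
      1 + t / (1 - β * t * h₀ (y (x, t))) * deriv h₀ (y (x, t)) ≠ 0) :
    (∀ x t : ℝ,
        deriv (fun τ => h₀ (y (x, τ)) / (1 - β * τ * h₀ (y (x, τ)))) t
          + h₀ (y (x, t)) / (1 - β * t * h₀ (y (x, t)))
            * deriv (fun ξ => h₀ (y (ξ, t)) / (1 - β * t * h₀ (y (ξ, t)))) x
          = β * (h₀ (y (x, t)) / (1 - β * t * h₀ (y (x, t)))) ^ 2) ∧
      ∀ x : ℝ, h₀ (y (x, 0)) / (1 - β * 0 * h₀ (y (x, 0))) = h₀ x := by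
  constructor
  · intro x t
    set u := y (x, t) with hu
    set H := h₀ u with hH
    set h' := deriv h₀ u with hh'
    set yx := fderiv ℝ y (x, t) (1, 0) with hyxdef
    set yt := fderiv ℝ y (x, t) (0, 1) with hytdef
    have hD0 : (0:ℝ) < 1 - β * t * H := hpos x t
    have hDne : 1 - β * t * H ≠ 0 := ne_of_gt hD0
    -- derivative of ξ ↦ y (ξ, t)
    have hcx : HasDerivAt (fun ξ : ℝ => (ξ, t)) ((1:ℝ), (0:ℝ)) x :=
      (hasDerivAt_id x).prodMk (hasDerivAt_const x t)
    have hyx : HasDerivAt (fun ξ => y (ξ, t)) yx x :=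
      (hy (x, t)).hasFDerivAt.comp_hasDerivAt x hcx
    have hct : HasDerivAt (fun τ : ℝ => (x, τ)) ((0:ℝ), (1:ℝ)) t :=
      (hasDerivAt_const t x).prodMk (hasDerivAt_id t)
    have hyt : HasDerivAt (fun τ => y (x, τ)) yt t :=
      (hy (x, t)).hasFDerivAt.comp_hasDerivAt t hct
    have hHx : HasDerivAt (fun ξ => h₀ (y (ξ, t))) (h' * yx) x :=
      (hh₀ u).hasDerivAt.comp x hyx
    have hHt : HasDerivAt (fun τ => h₀ (y (x, τ))) (h' * yt) t :=
      (hh₀ u).hasDerivAt.comp t hyt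
    have hDx : HasDerivAt (fun ξ => 1 - β * t * h₀ (y (ξ, t)))
        (-(β * t * (h' * yx))) x := (hHx.const_mul (β * t)).const_sub 1
    have hDt : HasDerivAt (fun τ => 1 - β * τ * h₀ (y (x, τ)))
        (-(β * 1 * H + β * t * (h' * yt))) t :=
      (((hasDerivAt_id t).const_mul β).mul hHt).const_sub 1
    -- derivative of relation in x
    have hFx : HasDerivAt
        (fun ξ => y (ξ, t) - Real.log (1 - β * t * h₀ (y (ξ, t))) / β)
        (yx - -(β * t * (h' * yx)) / (1 - β * t * H) / β) x :=
      hyx.sub ((hDx.log hDne).div_const β)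
    have hFid : (fun ξ => y (ξ, t) - Real.log (1 - β * t * h₀ (y (ξ, t))) / β)
        = fun ξ => ξ := funext fun ξ => (hrel ξ t).symm
    have E1 : yx - -(β * t * (h' * yx)) / (1 - β * t * H) / β = 1 := by
      have := hFid ▸ hFx
      exact this.unique (hasDerivAt_id x)
    -- derivative of relation in t
    have hFt : HasDerivAt
        (fun τ => y (x, τ) - Real.log (1 - β * τ * h₀ (y (x, τ))) / β)
        (yt - -(β * 1 * H + β * t * (h' * yt)) / (1 - β * t * H) / β) t :=
      hyt.sub ((hDt.log hDne).div_const β)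
    have hFc : (fun τ => y (x, τ) - Real.log (1 - β * τ * h₀ (y (x, τ))) / β)
        = fun _ => x := funext fun τ => (hrel x τ).symm
    have E2 : yt - -(β * 1 * H + β * t * (h' * yt)) / (1 - β * t * H) / β = 0 := by
      have := hFc ▸ hFt
      exact this.unique (hasDerivAt_const t x)
    -- q derivatives
    have hqx : deriv (fun ξ => h₀ (y (ξ, t)) / (1 - β * t * h₀ (y (ξ, t)))) x
        = (h' * yx * (1 - β * t * H) - H * -(β * t * (h' * yx)))
          / (1 - β * t * H) ^ 2 := (hHx.div hDx hDne).deriv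
    have hqt : deriv (fun τ => h₀ (y (x, τ)) / (1 - β * τ * h₀ (y (x, τ)))) t
        = (h' * yt * (1 - β * t * H) - H * -(β * 1 * H + β * t * (h' * yt)))
          / (1 - β * t * H) ^ 2 := (hHt.div hDt hDne).deriv
    field_simp at E1 E2
    have E1' : yx * ((1 - β * t * H) + t * h') = (1 - β * t * H) := by
      apply mul_left_cancel₀ hβ
      linear_combination β * E1
    have E2' : yt * ((1 - β * t * H) + t * h') = -H := by
      apply mul_left_cancel₀ hβ
      linear_combination β * E2
    have hytD : yt * (1 - β * t * H) = -H * yx := by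
      linear_combination yx * E2' - yt * E1'
    rw [hqx, hqt]
    field_simp
    linear_combination (h' * (1 - β * t * H) ^ 0) * hytD
  · intro x
    have h := hrel x 0
    simp only [mul_zero, zero_mul, mul_comm, sub_zero] at h
    have : y (x, 0) = x := by
      have h0 := hrel x 0
      simp at h0
      linarith
    simp [this]
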